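/- Let G be a finite simple graph with vertex set V. For every vertex v: the sum over all neighbors a of v of the number of 2-element subsets {b,c} ⊆ Γ(a) with b adjacent to c, b ∉ Γ(v), and c ∉ Γ(v), equals F8(v). -/

import Mathlib

open Finset
open scoped Classical

namespace FourProfiles

variable {V : Type*} [Fintype V] [DecidableEq V]

/-- Number of 3-element subsets of `V \ {v}` admitting a labeling `a, b, c` satisfying `P`. -/
noncomputable def cnt3 (v : V) (P : V → V → V → Prop) : ℕ :=
  (((Finset.univ : Finset V).powersetCard 3).filter
    (fun s => v ∉ s ∧ ∃ a ∈ s, ∃ b ∈ s, ∃ c ∈ s, s = {a, b, c} ∧ P a b c)).card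

variable (G : SimpleGraph V)

/-- Induced subgraph on `{v,a,b,c}` has exactly one edge, with `v` an endpoint. -/
noncomputable def F1 (v : V) : ℕ := cnt3 v fun a b c =>
  G.Adj v a ∧ ¬G.Adj v b ∧ ¬G.Adj v c ∧ ¬G.Adj a b ∧ ¬G.Adj a c ∧ ¬G.Adj b c

/-- Induced subgraph on `{v,a,b,c}` is a perfect matching (two disjoint edges). -/
noncomputable def F2 (v : V) : ℕ := cnt3 v fun a b c =>
  G.Adj v a ∧ G.Adj b c ∧ ¬G.Adj v b ∧ ¬G.Adj v c ∧ ¬G.Adj a b ∧ ¬G.Adj a c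

/-- Two-edge path plus isolated vertex, `v` an endpoint of the path. -/
noncomputable def F3 (v : V) : ℕ := cnt3 v fun a b c =>
  G.Adj v a ∧ G.Adj a b ∧ ¬G.Adj v b ∧ ¬G.Adj v c ∧ ¬G.Adj a c ∧ ¬G.Adj b c

/-- Two-edge path plus isolated vertex, `v` the middle vertex of the path. -/
noncomputable def F3' (v : V) : ℕ := cnt3 v fun a b c =>
  G.Adj v a ∧ G.Adj v b ∧ ¬G.Adj a b ∧ ¬G.Adj v c ∧ ¬G.Adj a c ∧ ¬G.Adj b c

/-- Path on four vertices, `v` an endpoint. -/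
noncomputable def F4 (v : V) : ℕ := cnt3 v fun a b c =>
  G.Adj v a ∧ G.Adj a b ∧ G.Adj b c ∧ ¬G.Adj v b ∧ ¬G.Adj v c ∧ ¬G.Adj a c

/-- Path on four vertices, `v` an internal (degree-2) vertex. -/
noncomputable def F4' (v : V) : ℕ := cnt3 v fun a b c =>
  G.Adj v a ∧ G.Adj v b ∧ G.Adj b c ∧ ¬G.Adj a b ∧ ¬G.Adj v c ∧ ¬G.Adj a c

/-- Triangle plus isolated vertex, `v` in the triangle. -/
noncomputable def F5 (v : V) : ℕ := cnt3 v fun a b c =>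
  G.Adj v a ∧ G.Adj v b ∧ G.Adj a b ∧ ¬G.Adj v c ∧ ¬G.Adj a c ∧ ¬G.Adj b c

/-- Star `K_{1,3}`, `v` a leaf. -/
noncomputable def F6 (v : V) : ℕ := cnt3 v fun a b c =>
  G.Adj v a ∧ G.Adj a b ∧ G.Adj a c ∧ ¬G.Adj v b ∧ ¬G.Adj v c ∧ ¬G.Adj b c

/-- Star `K_{1,3}`, `v` the center. -/
noncomputable def F6' (v : V) : ℕ := cnt3 v fun a b c =>
  G.Adj v a ∧ G.Adj v b ∧ G.Adj v c ∧ ¬G.Adj a b ∧ ¬G.Adj a c ∧ ¬G.Adj b c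

/-- 4-cycle. -/
noncomputable def F7 (v : V) : ℕ := cnt3 v fun a b c =>
  G.Adj v a ∧ G.Adj a b ∧ G.Adj b c ∧ G.Adj v c ∧ ¬G.Adj v b ∧ ¬G.Adj a c

/-- Paw (triangle with a pendant edge), `v` the pendant (degree-1) vertex. -/
noncomputable def F8 (v : V) : ℕ := cnt3 v fun a b c =>
  G.Adj v a ∧ G.Adj a b ∧ G.Adj a c ∧ G.Adj b c ∧ ¬G.Adj v b ∧ ¬G.Adj v c

/-- Paw, `v` the degree-3 vertex. -/
noncomputable def F8' (v : V) : ℕ := cnt3 v fun a b c =>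
  G.Adj v a ∧ G.Adj v b ∧ G.Adj a b ∧ G.Adj v c ∧ ¬G.Adj a c ∧ ¬G.Adj b c

/-- Paw, `v` one of the two degree-2 vertices. -/
noncomputable def F8'' (v : V) : ℕ := cnt3 v fun a b c =>
  G.Adj v a ∧ G.Adj v b ∧ G.Adj a b ∧ G.Adj a c ∧ ¬G.Adj v c ∧ ¬G.Adj b c

/-- Diamond (`K4` minus one edge), `v` one of the two degree-2 vertices. -/
noncomputable def F9 (v : V) : ℕ := cnt3 v fun a b c =>
  G.Adj v a ∧ G.Adj v b ∧ G.Adj a b ∧ G.Adj a c ∧ G.Adj b c ∧ ¬G.Adj v c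

/-- Diamond, `v` one of the two degree-3 vertices. -/
noncomputable def F9' (v : V) : ℕ := cnt3 v fun a b c =>
  G.Adj v a ∧ G.Adj v b ∧ G.Adj v c ∧ G.Adj a b ∧ G.Adj a c ∧ ¬G.Adj b c

/-- Complete graph `K4`. -/
noncomputable def F10 (v : V) : ℕ := cnt3 v fun a b c =>
  G.Adj v a ∧ G.Adj v b ∧ G.Adj v c ∧ G.Adj a b ∧ G.Adj a c ∧ G.Adj b c

/-- `|V \ (Γ(v) ∪ Γ(a))|`. -/
noncomputable def n1e (v a : V) : ℕ :=
  (Finset.univ.filter fun x => ¬G.Adj v x ∧ ¬G.Adj a x).card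

/-- `|Γ(v) \ (Γ(a) ∪ {a})|`. -/
noncomputable def n2c (v a : V) : ℕ :=
  (Finset.univ.filter fun x => G.Adj v x ∧ ¬G.Adj a x ∧ x ≠ a).card

/-- `|Γ(a) \ (Γ(v) ∪ {v})|`. -/
noncomputable def n2e (v a : V) : ℕ :=
  (Finset.univ.filter fun x => G.Adj a x ∧ ¬G.Adj v x ∧ x ≠ v).card

/-- `|Γ(v) ∩ Γ(a)|`. -/
noncomputable def n3 (v a : V) : ℕ :=
  (Finset.univ.filter fun x => G.Adj v x ∧ G.Adj a x).card

/-- Number of edges of `G` with neither endpoint in `Γ(v) ∪ {v}`. -/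
noncomputable def n1d (v : V) : ℕ :=
  (((Finset.univ : Finset V).powersetCard 2).filter
    (fun s => ∃ a ∈ s, ∃ b ∈ s, s = {a, b} ∧ G.Adj a b ∧
      ¬G.Adj v a ∧ ¬G.Adj v b ∧ a ≠ v ∧ b ≠ v)).card

/-- Number of triangles of `G` containing `a`. -/
noncomputable def tri (a : V) : ℕ :=
  (((Finset.univ : Finset V).powersetCard 2).filter
    (fun s => ∃ x ∈ s, ∃ y ∈ s, s = {x, y} ∧ G.Adj a x ∧ G.Adj a y ∧ G.Adj x y)).card

/-- Number of 2-element subsets `{x,y}` of `V \ {a}` inducing a two-edge path with `a`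
an endpoint. -/
noncomputable def twoPathEnd (a : V) : ℕ :=
  (((Finset.univ : Finset V).powersetCard 2).filter
    (fun s => a ∉ s ∧ ∃ x ∈ s, ∃ y ∈ s, s = {x, y} ∧ G.Adj a x ∧ G.Adj x y ∧ ¬G.Adj a y)).card

/-- Number of 2-element subsets `{b,c} ⊆ Γ(a)` with `b` adjacent to `c`, `b ∈ Γ(v)`,
`c ∈ Γ(v)`. -/
noncomputable def triIn (v a : V) : ℕ :=
  (((Finset.univ : Finset V).powersetCard 2).filter
    (fun s => ∃ b ∈ s, ∃ c ∈ s, s = {b, c} ∧ G.Adj a b ∧ G.Adj a c ∧ G.Adj b c ∧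
      G.Adj v b ∧ G.Adj v c)).card

/-- Number of 2-element subsets `{b,c} ⊆ Γ(a)` with `b` adjacent to `c`, `b ∉ Γ(v)`,
`c ∉ Γ(v)`. -/
noncomputable def triOut (v a : V) : ℕ :=
  (((Finset.univ : Finset V).powersetCard 2).filter
    (fun s => ∃ b ∈ s, ∃ c ∈ s, s = {b, c} ∧ G.Adj a b ∧ G.Adj a c ∧ G.Adj b c ∧
      ¬G.Adj v b ∧ ¬G.Adj v c)).card

theorem statement17 [DecidableRel G.Adj] (v : V) :
    ∑ a ∈ G.neighborFinset v, triOut G v a = F8 G v := by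
  classical
  simp only [triOut]
  rw [← Finset.card_sigma]
  unfold F8 cnt3
  apply Finset.card_bij (fun p _ => insert p.1 p.2)
  · rintro ⟨a, s⟩ hp
    simp only [Finset.mem_sigma, SimpleGraph.mem_neighborFinset, Finset.mem_filter,
      Finset.mem_powersetCard_univ] at hp ⊢
    obtain ⟨hva, hs2, b, hb, c, hc, hsbc, hab, hac, hbc, hvb, hvc⟩ := hp
    subst hsbc
    have hbc' : b ≠ c := by
      rintro rfl
      simp at hs2
    have hanb : a ≠ b := fun h => hvb (h ▸ hva)
    have hanc : a ≠ c := fun h => hvc (h ▸ hva)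
    refine ⟨?_, ?_, ?_⟩
    · simp [Finset.card_insert_of_notMem, hanb, hanc, hbc']
    · simp only [Finset.mem_insert, Finset.mem_singleton, not_or]
      exact ⟨fun h => G.irrefl (h ▸ hva), fun h => hvc (by rw [h]; exact hbc),
        fun h => hvb (by rw [h]; exact G.adj_symm hbc)⟩
    · exact ⟨a, by simp, b, by simp, c, by simp, rfl, hva, hab, hac, hbc, hvb, hvc⟩
  · rintro ⟨a, s⟩ hp ⟨a', s'⟩ hp' heq
    simp only [Finset.mem_sigma, SimpleGraph.mem_neighborFinset, Finset.mem_filter,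
      Finset.mem_powersetCard_univ] at hp hp'
    obtain ⟨hva, hs2, b, hb, c, hc, hsbc, hab, hac, hbc, hvb, hvc⟩ := hp
    obtain ⟨hva', hs2', b', hb', c', hc', hsbc', hab', hac', hbc', hvb', hvc'⟩ := hp'
    have hns : ∀ x ∈ s, ¬G.Adj v x := by
      intro x hx
      rw [hsbc] at hx
      rcases Finset.mem_insert.1 hx with rfl | hx
      · exact hvb
      · rw [Finset.mem_singleton.1 hx]; exact hvc
    have hns' : ∀ x ∈ s', ¬G.Adj v x := by
      intro x hx
      rw [hsbc'] at hx
      rcases Finset.mem_insert.1 hx with rfl | hx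
      · exact hvb'
      · rw [Finset.mem_singleton.1 hx]; exact hvc'
    have has : a ∉ s := fun h => hns a h hva
    have has' : a' ∉ s' := fun h => hns' a' h hva'
    have haa : a = a' := by
      have : a ∈ insert a' s' := heq ▸ Finset.mem_insert_self a s
      rcases Finset.mem_insert.1 this with h | h
      · exact h
      · exact absurd hva (hns' a h)
    subst haa
    have hss : s = s' := by
      ext x
      constructor
      · intro hx
        have : x ∈ insert a s' := heq ▸ Finset.mem_insert_of_mem hx
        rcases Finset.mem_insert.1 this with rfl | h
        · exact absurd hva (hns x hx)
        · exact h
      · intro hx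
        have : x ∈ insert a s := heq ▸ Finset.mem_insert_of_mem hx
        rcases Finset.mem_insert.1 this with rfl | h
        · exact absurd hva' (hns' x hx)
        · exact h
    simp [hss]
  · intro t ht
    simp only [Finset.mem_filter, Finset.mem_powersetCard_univ] at ht
    obtain ⟨ht3, hvt, a, ha, b, hb, c, hc, htabc, hva, hab, hac, hbc, hvb, hvc⟩ := ht
    have hbc' : b ≠ c := G.ne_of_adj hbc
    have hanb : a ≠ b := fun h => hvb (h ▸ hva)
    have hanc : a ≠ c := fun h => hvc (h ▸ hva)
    refine ⟨⟨a, {b, c}⟩, ?_, ?_⟩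
    · simp only [Finset.mem_sigma, SimpleGraph.mem_neighborFinset, Finset.mem_filter,
        Finset.mem_powersetCard_univ]
      exact ⟨hva, by simp [Finset.card_insert_of_notMem, hbc'],
        b, by simp, c, by simp, rfl, hab, hac, hbc, hvb, hvc⟩
    · simp [htabc]

end FourProfiles
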